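/- Let n_a be a node such that π(m | par m) > 0 for every strict descendant m of n_a. Then the cost function c defined by c(n) = Λ(n | n_a) − 1 if n_a ≺ n, and c(n) = ∞ otherwise, is self-counting. -/

import Mathlib

open scoped ENNReal NNReal Classical

/-- A rooted tree: a parent map with a root that every node reaches after finitely
many applications of the parent map. -/
structure ParentTree (N : Type*) where
  root : N
  par : N → N
  par_root : par root = root
  reaches_root : ∀ n : N, ∃ k : ℕ, par^[k] n = root

namespace ParentTree

variable {N : Type*}

/-- `t.anc n m` means `n` is an ancestor of `m` (possibly `n = m`). -/
def anc (t : ParentTree N) (n m : N) : Prop := ∃ k : ℕ, t.par^[k] m = n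

/-- `t.sanc n m` means `n` is a strict ancestor of `m`. -/
def sanc (t : ParentTree N) (n m : N) : Prop := t.anc n m ∧ n ≠ m

/-- The set of children of a node. -/
def children (t : ParentTree N) (n : N) : Set N := {m | m ≠ t.root ∧ t.par m = n}

/-- The depth of a node: the least `k` with `par^[k] n = root`. -/
noncomputable def depth (t : ParentTree N) (n : N) : ℕ := sInf {k : ℕ | t.par^[k] n = t.root}

/-- The distance from an ancestor `n` to `m`: the least `k` with `par^[k] m = n`. -/
noncomputable def dist (t : ParentTree N) (n m : N) : ℕ := sInf {k : ℕ | t.par^[k] m = n}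

end ParentTree

/-- A policy: conditional probabilities `π(m | par m)` on nodes, summing to at most 1
over the children of any node. -/
structure Policy {N : Type*} (t : ParentTree N) where
  cond : N → ℝ
  cond_nonneg : ∀ m : N, 0 ≤ cond m
  cond_le_one : ∀ m : N, cond m ≤ 1
  sum_le_one : ∀ (n : N) (s : Finset N), ↑s ⊆ t.children n → ∑ m ∈ s, cond m ≤ 1

namespace Policy

variable {N : Type*} {t : ParentTree N}

/-- The relative path probability `π(n | na)` as an extended nonnegative real:
the product of the conditional probabilities along the path from `na` (excluded) to `n`. -/
noncomputable def relProbE (P : Policy t) (na n : N) : ℝ≥0∞ :=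
  ∏ j ∈ Finset.range (t.dist na n), ENNReal.ofReal (P.cond (t.par^[j] n))

/-- The rooted slenderness cost `Λ(n | na) = Σ_{na ⪯ n̄ ⪯ n} 1/π(n̄ | na)`, set to `∞`
when `na` is not an ancestor of `n`. -/
noncomputable def rootSlend (P : Policy t) (na n : N) : ℝ≥0∞ :=
  if t.anc na n then
    ∑ k ∈ Finset.range (t.dist na n + 1), (P.relProbE na (t.par^[k] n))⁻¹
  else ⊤

end Policy

section Aux

variable {N : Type*} {t : ParentTree N}

lemma anc_refl (n : N) : t.anc n n := ⟨0, rfl⟩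

lemma anc_trans {a b c : N} (h1 : t.anc a b) (h2 : t.anc b c) : t.anc a c := by
  obtain ⟨k, hk⟩ := h1; obtain ⟨j, hj⟩ := h2
  exact ⟨k + j, by rw [Function.iterate_add_apply, hj, hk]⟩

lemma dist_spec {na n : N} (h : t.anc na n) : t.par^[t.dist na n] n = na :=
  Nat.sInf_mem h

lemma dist_le {na n : N} {k : ℕ} (h : t.par^[k] n = na) : t.dist na n ≤ k :=
  Nat.sInf_le h

lemma dist_self' (n : N) : t.dist n n = 0 :=
  Nat.le_zero.mp (dist_le rfl)

lemma cycle_root {n : N} {k : ℕ} (hk : 0 < k) (h : t.par^[k] n = n) : n = t.root := by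
  obtain ⟨m, hm⟩ := t.reaches_root n
  have hcyc : t.par^[k * (m + 1)] n = n := by
    rw [Function.iterate_mul]; exact Function.iterate_fixed h (m + 1)
  have hge : m ≤ k * (m + 1) := by nlinarith
  have : t.par^[k * (m + 1)] n = t.root := by
    rw [← Nat.sub_add_cancel hge, Function.iterate_add_apply, hm]
    exact Function.iterate_fixed t.par_root _
  rw [hcyc] at this; exact this

lemma dist_add {na m n : N} (h1 : t.anc na m) (h2 : t.anc m n) :
    t.dist na n = t.dist na m + t.dist m n := by
  have hanc : t.anc na n := anc_trans h1 h2
  set d := t.dist na n with hd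
  set d1 := t.dist na m with hd1
  set d2 := t.dist m n with hd2
  have hdn : t.par^[d] n = na := dist_spec hanc
  have hd1m : t.par^[d1] m = na := dist_spec h1
  have hd2n : t.par^[d2] n = m := dist_spec h2
  have hle : d ≤ d1 + d2 := by
    apply dist_le
    rw [Function.iterate_add_apply, hd2n, hd1m]
  have hd2d : d2 ≤ d := by
    by_contra hlt
    push_neg at hlt
    have hm' : t.par^[d2 - d] na = m := by
      rw [← hdn, ← Function.iterate_add_apply, Nat.sub_add_cancel hlt.le, hd2n]
    have hcyc : t.par^[d1 + (d2 - d)] na = na := by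
      rw [Function.iterate_add_apply, hm', hd1m]
    have hpos : 0 < d1 + (d2 - d) := by omega
    have hroot : na = t.root := cycle_root hpos hcyc
    have hmroot : m = t.root := by
      rw [← hm', hroot]; exact Function.iterate_fixed t.par_root _
    have : m = na := by rw [hroot, hmroot]
    rw [this] at hd2
    omega
  have hge : d1 + d2 ≤ d := by
    have : t.par^[d - d2] m = na := by
      rw [← hd2n, ← Function.iterate_add_apply, Nat.sub_add_cancel hd2d, hdn]
    have := dist_le this
    omega
  omega

/-- Non-root fixed points don't exist. -/
lemma fixed_eq_root {n : N} (h : t.par n = n) : n = t.root :=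
  cycle_root (k := 1) one_pos (by simpa using h)

lemma child_sanc {na c : N} (hpar : t.par c = na) (hc : c ≠ t.root) : t.sanc na c := by
  refine ⟨⟨1, by simpa using hpar⟩, ?_⟩
  intro h
  exact hc (fixed_eq_root (by rw [hpar, ← h]))

lemma dist_child {na c : N} (hpar : t.par c = na) (hc : c ≠ t.root) : t.dist na c = 1 := by
  have h1 : t.dist na c ≤ 1 := dist_le (by simpa using hpar)
  have h0 : t.dist na c ≠ 0 := by
    intro h
    have := dist_spec (child_sanc hpar hc).1
    rw [h] at this
    exact (child_sanc hpar hc).2 this.symm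
  omega

lemma sanc_of_child_sanc {na c m : N} (hpar : t.par c = na) (hc : c ≠ t.root)
    (h : t.sanc c m) : t.sanc na m := by
  refine ⟨anc_trans (child_sanc hpar hc).1 h.1, ?_⟩
  rintro rfl
  obtain ⟨e, he⟩ := h.1
  have hcyc : t.par^[e + 1] na = na := by
    rw [Function.iterate_succ_apply', he, hpar]
  have : na = t.root := cycle_root (Nat.succ_pos e) hcyc
  apply hc
  rw [← he, this]
  exact Function.iterate_fixed t.par_root _

/-- The child of `na` on the path to a strict descendant `n`. -/
lemma exists_child {na n : N} (h : t.sanc na n) :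
    ∃ c : N, t.par c = na ∧ c ≠ t.root ∧ t.anc c n := by
  have hd : t.par^[t.dist na n] n = na := dist_spec h.1
  have hpos : 0 < t.dist na n := by
    rcases Nat.eq_zero_or_pos (t.dist na n) with h0 | h0
    · rw [h0] at hd; exact absurd hd.symm h.2
    · exact h0
  refine ⟨t.par^[t.dist na n - 1] n, ?_, ?_, ⟨t.dist na n - 1, rfl⟩⟩
  · have h1 : t.par^[t.dist na n - 1 + 1] n = na := by
      rw [Nat.sub_add_cancel hpos]; exact hd
    rw [Function.iterate_succ_apply'] at h1
    exact h1
  · intro hroot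
    have hna : na = t.root := by
      have h2 : t.par^[1 + (t.dist na n - 1)] n = t.root := by
        rw [Function.iterate_add_apply, hroot]
        simp [t.par_root]
      have h5 : 1 + (t.dist na n - 1) = t.dist na n := by omega
      rw [h5] at h2
      exact hd.symm.trans h2
    have h3 : t.par^[t.dist na n - 1] n = na := by rw [hroot, hna]
    have := dist_le h3
    omega

end Aux

section Aux2

variable {N : Type*} {t : ParentTree N} {P : Policy t}

lemma relProbE_self (P : Policy t) (n : N) : P.relProbE n n = 1 := by
  unfold Policy.relProbE
  rw [dist_self']
  simp

lemma relProbE_le_one (P : Policy t) (na n : N) : P.relProbE na n ≤ 1 :=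
  Finset.prod_le_one (fun _ _ => zero_le)
    (fun _ _ => ENNReal.ofReal_le_one.mpr (P.cond_le_one _))

lemma relProbE_step {na c m : N} (hpar : t.par c = na) (hc : c ≠ t.root) (h : t.anc c m) :
    P.relProbE na m = ENNReal.ofReal (P.cond c) * P.relProbE c m := by
  have hd : t.dist na m = t.dist c m + 1 := by
    rw [dist_add (child_sanc hpar hc).1 h, dist_child hpar hc, Nat.add_comm]
  unfold Policy.relProbE
  rw [hd, Finset.prod_range_succ, dist_spec h, mul_comm]

lemma one_le_rootSlend {na n : N} (h : t.anc na n) : 1 ≤ P.rootSlend na n := by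
  unfold Policy.rootSlend
  rw [if_pos h]
  calc (1:ℝ≥0∞) ≤ (P.relProbE na (t.par^[t.dist na n] n))⁻¹ :=
        ENNReal.one_le_inv.mpr (relProbE_le_one P na _)
    _ ≤ _ := Finset.single_le_sum (f := fun k => (P.relProbE na (t.par^[k] n))⁻¹)
        (fun _ _ => zero_le) (Finset.self_mem_range_succ _)

lemma two_le_rootSlend {na n : N} (h : t.sanc na n) : 2 ≤ P.rootSlend na n := by
  have hdpos : 0 < t.dist na n := by
    by_contra h0
    push_neg at h0
    have h0' : t.dist na n = 0 := by omega
    have hsp := dist_spec h.1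
    rw [h0'] at hsp
    exact h.2 hsp.symm
  unfold Policy.rootSlend
  rw [if_pos h.1]
  have hb : ∀ k ∈ Finset.range (t.dist na n + 1), (1:ℝ≥0∞) ≤ (P.relProbE na (t.par^[k] n))⁻¹ :=
    fun k _ => ENNReal.one_le_inv.mpr (relProbE_le_one P na _)
  have hsum := Finset.card_nsmul_le_sum (Finset.range (t.dist na n + 1)) _ 1 hb
  rw [Finset.card_range, nsmul_eq_mul, mul_one] at hsum
  refine le_trans ?_ hsum
  calc (2:ℝ≥0∞) = ((2:ℕ):ℝ≥0∞) := by norm_num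
    _ ≤ ((t.dist na n + 1 : ℕ) : ℝ≥0∞) := by
        exact_mod_cast (by omega : 2 ≤ t.dist na n + 1)

lemma rootSlend_step {na c n : N} (hpar : t.par c = na) (hc : c ≠ t.root) (h : t.anc c n)
    (hq0 : ENNReal.ofReal (P.cond c) ≠ 0) :
    P.rootSlend na n = (ENNReal.ofReal (P.cond c))⁻¹ * P.rootSlend c n + 1 := by
  have hanc : t.anc na n := anc_trans (child_sanc hpar hc).1 h
  have hd : t.dist na n = t.dist c n + 1 := by
    rw [dist_add (child_sanc hpar hc).1 h, dist_child hpar hc, Nat.add_comm]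
  unfold Policy.rootSlend
  rw [if_pos hanc, if_pos h, hd, Finset.sum_range_succ]
  have hlast : t.par^[t.dist c n + 1] n = na := by
    rw [← hd]; exact dist_spec hanc
  rw [hlast, relProbE_self, inv_one]
  congr 1
  rw [Finset.mul_sum]
  refine Finset.sum_congr rfl (fun k hk => ?_)
  rw [Finset.mem_range] at hk
  have hanck : t.anc c (t.par^[k] n) := by
    refine ⟨t.dist c n - k, ?_⟩
    rw [← Function.iterate_add_apply]
    have heq : t.dist c n - k + k = t.dist c n := by omega
    rw [heq]
    exact dist_spec h
  rw [relProbE_step hpar hc hanck,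
    ENNReal.mul_inv (Or.inl hq0) (Or.inl ENNReal.ofReal_ne_top)]

lemma biUnion_card_le {α ι : Type*} (F : Finset ι) (T : ι → Set α) (g : ι → ℝ)
    (h : ∀ c ∈ F, (T c).Finite ∧ ((T c).ncard : ℝ) ≤ g c) :
    (⋃ c ∈ F, T c).Finite ∧ ((⋃ c ∈ F, T c).ncard : ℝ) ≤ ∑ c ∈ F, g c := by
  classical
  induction F using Finset.induction_on with
  | empty => simp
  | @insert a s ha ih =>
    rw [Finset.set_biUnion_insert, Finset.sum_insert ha]
    have hih := ih (fun c hc => h c (Finset.mem_insert_of_mem hc))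
    have ha' := h a (Finset.mem_insert_self a s)
    refine ⟨ha'.1.union hih.1, ?_⟩
    calc ((T a ∪ ⋃ c ∈ s, T c).ncard : ℝ) ≤ (T a).ncard + (⋃ c ∈ s, T c).ncard := by
          exact_mod_cast Set.ncard_union_le _ _
      _ ≤ g a + ∑ c ∈ s, g c := add_le_add ha'.2 hih.2

lemma key (t : ParentTree N) (hfin : ∀ n : N, (t.children n).Finite) (P : Policy t) :
    ∀ (k : ℕ) (θ : ℝ), 0 ≤ θ → θ ≤ k → ∀ na : N, (∀ m : N, t.sanc na m → 0 < P.cond m) →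
      {n | t.sanc na n ∧ P.rootSlend na n ≤ ENNReal.ofReal θ + 1}.Finite ∧
      ({n | t.sanc na n ∧ P.rootSlend na n ≤ ENNReal.ofReal θ + 1}.ncard : ℝ) ≤ θ := by
  intro k
  induction k with
  | zero =>
    intro θ h0 hk na hpos
    have hθ : θ = 0 := le_antisymm (by exact_mod_cast hk) h0
    subst hθ
    have hempty : {n | t.sanc na n ∧ P.rootSlend na n ≤ ENNReal.ofReal 0 + 1} = ∅ := by
      ext n
      simp only [Set.mem_setOf_eq, Set.mem_empty_iff_false, iff_false, not_and]
      intro hs hle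
      have h2 : (2:ℝ≥0∞) ≤ P.rootSlend na n := two_le_rootSlend hs
      rw [ENNReal.ofReal_zero, zero_add] at hle
      exact absurd (le_trans h2 hle) (by norm_num)
    rw [hempty]
    simp
  | succ k ih =>
    intro θ h0 hk na hpos
    set S := {n | t.sanc na n ∧ P.rootSlend na n ≤ ENNReal.ofReal θ + 1} with hS
    set F := (hfin na).toFinset with hF
    set T : N → Set N := fun c => {n | n ∈ S ∧ t.anc c n} with hT
    have hsub : S ⊆ ⋃ c ∈ F, T c := by
      intro n hn
      obtain ⟨c, hpar, hcroot, hanc⟩ := exists_child hn.1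
      exact Set.mem_biUnion ((hfin na).mem_toFinset.mpr ⟨hcroot, hpar⟩) ⟨hn, hanc⟩
    have hTc : ∀ c ∈ F, (T c).Finite ∧ ((T c).ncard : ℝ) ≤ θ * P.cond c := by
      intro c hcF
      obtain ⟨hcroot, hpar⟩ := (hfin na).mem_toFinset.mp hcF
      have hsanc_c : t.sanc na c := child_sanc hpar hcroot
      have hqpos : 0 < P.cond c := hpos c hsanc_c
      have hq0 : ENNReal.ofReal (P.cond c) ≠ 0 := (ENNReal.ofReal_pos.mpr hqpos).ne'
      have hqtop : ENNReal.ofReal (P.cond c) ≠ ⊤ := ENNReal.ofReal_ne_top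
      have hmem : ∀ n ∈ T c, P.rootSlend c n ≤ ENNReal.ofReal (θ * P.cond c) := by
        intro n hn
        obtain ⟨⟨hsn, hle⟩, hanc⟩ := hn
        rw [rootSlend_step hpar hcroot hanc hq0] at hle
        have hle2 : (ENNReal.ofReal (P.cond c))⁻¹ * P.rootSlend c n ≤ ENNReal.ofReal θ :=
          (ENNReal.add_le_add_iff_right ENNReal.one_ne_top).mp hle
        rw [ENNReal.inv_mul_le_iff hq0 hqtop] at hle2
        calc P.rootSlend c n ≤ ENNReal.ofReal (P.cond c) * ENNReal.ofReal θ := hle2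
          _ = ENNReal.ofReal (θ * P.cond c) := by
              rw [← ENNReal.ofReal_mul hqpos.le, mul_comm]
      by_cases hcase : 1 ≤ θ * P.cond c
      · have hθ'0 : 0 ≤ θ * P.cond c - 1 := by linarith
        have hθ'k : θ * P.cond c - 1 ≤ (k:ℝ) := by
          have h1 : P.cond c ≤ 1 := P.cond_le_one c
          have hk' : θ ≤ (k:ℝ) + 1 := by exact_mod_cast hk
          nlinarith
        have hpos' : ∀ m, t.sanc c m → 0 < P.cond m :=
          fun m hm => hpos m (sanc_of_child_sanc hpar hcroot hm)
        obtain ⟨hfin', hcard'⟩ := ih (θ * P.cond c - 1) hθ'0 hθ'k c hpos'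
        set S' := {n | t.sanc c n ∧ P.rootSlend c n ≤ ENNReal.ofReal (θ * P.cond c - 1) + 1}
          with hS'
        have hsub' : T c ⊆ insert c S' := by
          intro n hn
          by_cases hnc : n = c
          · rw [hnc]; exact Set.mem_insert c _
          · apply Set.mem_insert_of_mem
            refine ⟨⟨hn.2, fun hcn => hnc hcn.symm⟩, ?_⟩
            calc P.rootSlend c n ≤ ENNReal.ofReal (θ * P.cond c) := hmem n hn
              _ = ENNReal.ofReal (θ * P.cond c - 1) + 1 := by
                  rw [← ENNReal.ofReal_one, ← ENNReal.ofReal_add hθ'0 zero_le_one]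
                  congr 1; ring
        have hfinT : (T c).Finite := (hfin'.insert c).subset hsub'
        refine ⟨hfinT, ?_⟩
        have h1 : (T c).ncard ≤ (insert c S').ncard :=
          Set.ncard_le_ncard hsub' (hfin'.insert c)
        have h2 : (insert c S').ncard ≤ S'.ncard + 1 := Set.ncard_insert_le _ _
        have h3 : ((T c).ncard : ℝ) ≤ (S'.ncard : ℝ) + 1 := by
          exact_mod_cast le_trans h1 h2
        linarith
      · push_neg at hcase
        have hempty : T c = ∅ := by
          ext n
          simp only [Set.mem_empty_iff_false, iff_false]
          intro hn
          have h1 : (1:ℝ≥0∞) ≤ P.rootSlend c n := one_le_rootSlend hn.2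
          have h2 := le_trans h1 (hmem n hn)
          rw [ENNReal.one_le_ofReal] at h2
          linarith
        rw [hempty]
        simp only [Set.finite_empty, Set.ncard_empty, Nat.cast_zero, true_and]
        positivity
    obtain ⟨hUfin, hUcard⟩ := biUnion_card_le F T _ hTc
    refine ⟨hUfin.subset hsub, ?_⟩
    have h1 : (S.ncard : ℝ) ≤ ((⋃ c ∈ F, T c).ncard : ℝ) := by
      exact_mod_cast Set.ncard_le_ncard hsub hUfin
    have h2 : ∑ c ∈ F, θ * P.cond c ≤ θ := by
      rw [← Finset.mul_sum]
      have hsle : ∑ c ∈ F, P.cond c ≤ 1 := by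
        refine P.sum_le_one na F ?_
        rw [hF, Set.Finite.coe_toFinset]

      exact mul_le_of_le_one_right h0 hsle
    linarith

end Aux2

/-- A `[0,∞]`-valued cost function is self-counting if for every `θ ≥ 0` the set of nodes
of cost at most `θ` is finite and has at most `θ` elements. -/
def SelfCountingE {α : Type*} (c : α → ℝ≥0∞) : Prop :=
  ∀ θ : ℝ, 0 ≤ θ →
    {n | c n ≤ ENNReal.ofReal θ}.Finite ∧ ({n | c n ≤ ENNReal.ofReal θ}.ncard : ℝ) ≤ θ

/-- if `π(m | par m) > 0` for every strict descendant `m` of `n_a`, then the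
cost function `c(n) = Λ(n | n_a) − 1` for `n_a ≺ n` and `c(n) = ∞` otherwise is
self-counting. -/
theorem stmt13 {N : Type*} (t : ParentTree N) (hfin : ∀ n : N, (t.children n).Finite)
    (P : Policy t) (na : N)
    (hpos : ∀ m : N, t.sanc na m → 0 < P.cond m) :
    SelfCountingE (fun n => if t.sanc na n then P.rootSlend na n - 1 else ⊤) := by
  intro θ h0
  have hset : {n | (fun n => if t.sanc na n then P.rootSlend na n - 1 else ⊤) n
        ≤ ENNReal.ofReal θ}
      = {n | t.sanc na n ∧ P.rootSlend na n ≤ ENNReal.ofReal θ + 1} := by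
    ext n
    simp only [Set.mem_setOf_eq]
    by_cases hs : t.sanc na n
    · rw [if_pos hs, tsub_le_iff_right]
      exact ⟨fun h => ⟨hs, h⟩, fun h => h.2⟩
    · rw [if_neg hs]
      simp [hs, top_le_iff, (ENNReal.ofReal_ne_top : ENNReal.ofReal θ ≠ ⊤)]
  rw [hset]
  exact key t hfin P ⌈θ⌉₊ θ h0 (Nat.le_ceil θ) na hpos
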